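/- Concavity preservation of the CVaR QD-learning update (Theorem 3): let N ∈ ℕ be the number of agents with neighbor sets N(n) ⊆ {1,…,N}, let s ∈ S, a ∈ A be the current state–action pair and s' ∈ S the observed next state, let α ≥ 0, β ≥ 0 with 1 − α − |N(n)|·β ≥ 0 for every agent n, and let c_n(s,a) ∈ ℝ be agent n's cost. Suppose Q_n : S × A × [0,1] → ℝ are bounded functions such that for every agent n and every (σ,α') ∈ S × A, the map y ↦ y·Q_n(σ,α',y) is concave on [0,1]. Define for each agent n and y ∈ (0,1]: Q'_n(s,a,y) := (1 − α − |N(n)|·β)·Q_n(s,a,y) + β·Σ_{l ∈ N(n)} Q_l(s,a,y) + α·( c_n(s,a) + γ · min_{a' ∈ A} sup_{ξ ∈ U(y,P(·|s,a))} ξ(s')·Q_n(s',a', y·ξ(s')) ), where γ ∈ [0,1). Then for every agent n, the map y ↦ y·Q'_n(s,a,y) is concave on (0,1]. -/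

import Mathlib

noncomputable section

/-- The CVaR risk envelope `U(y, p)`. -/
def riskEnv {Ω : Type*} [Fintype Ω] (y : ℝ) (p : Ω → ℝ) : Set (Ω → ℝ) :=
  {ξ | (∀ ω, 0 ≤ ξ ω ∧ ξ ω ≤ 1 / y) ∧ ∑ ω, ξ ω * p ω = 1}

private lemma mul_csSup_le' {S : Set ℝ} {a c : ℝ} (ha : 0 ≤ a) (hS : S.Nonempty)
    (h : ∀ v ∈ S, a * v ≤ c) : a * sSup S ≤ c := by
  rcases ha.eq_or_lt with rfl | ha'
  · obtain ⟨v, hv⟩ := hS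
    simpa using h v hv
  · rw [mul_comm, ← le_div_iff₀ ha']
    exact csSup_le hS fun v hv => (le_div_iff₀ ha').mpr (by rw [mul_comm]; exact h v hv)

private lemma combine_csSup_le {S1 S2 : Set ℝ} {a b c : ℝ} (ha : 0 ≤ a) (hb : 0 ≤ b)
    (h1 : S1.Nonempty) (h2 : S2.Nonempty)
    (H : ∀ v1 ∈ S1, ∀ v2 ∈ S2, a * v1 + b * v2 ≤ c) :
    a * sSup S1 + b * sSup S2 ≤ c := by
  have step1 : ∀ v1 ∈ S1, b * sSup S2 ≤ c - a * v1 := fun v1 hv1 =>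
    mul_csSup_le' hb h2 fun v2 hv2 => by linarith [H v1 hv1 v2 hv2]
  have step2 : a * sSup S1 ≤ c - b * sSup S2 :=
    mul_csSup_le' ha h1 fun v1 hv1 => by linarith [step1 v1 hv1]
  linarith

private lemma one_mem_riskEnv {Ω : Type*} [Fintype Ω] {y : ℝ} (hy0 : 0 < y) (hy1 : y ≤ 1)
    {p : Ω → ℝ} (hp1 : ∑ ω, p ω = 1) : (fun _ => (1:ℝ)) ∈ riskEnv y p := by
  refine ⟨fun ω => ⟨zero_le_one, ?_⟩, by simpa using hp1⟩
  rw [le_div_iff₀ hy0, one_mul]; exact hy1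

private lemma riskEnv_forward {Ω : Type*} [Fintype Ω] {y : ℝ} (hy0 : 0 < y) {p : Ω → ℝ}
    (hp0 : ∀ ω, 0 ≤ p ω) (hp1 : ∑ ω, p ω = 1) (ω0 : Ω) {ξ : Ω → ℝ}
    (hξ : ξ ∈ riskEnv y p) :
    0 ≤ y * ξ ω0 ∧ y * ξ ω0 ≤ 1 ∧ (y * ξ ω0) * p ω0 ≤ y ∧
      y - (1 - p ω0) ≤ (y * ξ ω0) * p ω0 := by
  classical
  obtain ⟨hbd, hsum⟩ := hξ
  have h0 := (hbd ω0).1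
  have h1 := (hbd ω0).2
  have ht0 : 0 ≤ y * ξ ω0 := mul_nonneg hy0.le h0
  have ht1 : y * ξ ω0 ≤ 1 := by
    calc y * ξ ω0 ≤ y * (1 / y) := mul_le_mul_of_nonneg_left h1 hy0.le
      _ = 1 := by field_simp
  have herase : ∑ ω ∈ Finset.univ.erase ω0, ξ ω * p ω = 1 - ξ ω0 * p ω0 := by
    have := Finset.sum_erase_add Finset.univ (fun ω => ξ ω * p ω) (Finset.mem_univ ω0)
    simp only [hsum] at this ⊢
    linarith [this]
  have heraseP : ∑ ω ∈ Finset.univ.erase ω0, p ω = 1 - p ω0 := by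
    have := Finset.sum_erase_add Finset.univ p (Finset.mem_univ ω0)
    rw [hp1] at this; linarith [this]
  have hupper : ξ ω0 * p ω0 ≤ 1 := by
    have hterm : ∀ ω ∈ Finset.univ.erase ω0, 0 ≤ ξ ω * p ω := fun ω _ =>
      mul_nonneg (hbd ω).1 (hp0 ω)
    have := Finset.sum_nonneg hterm
    linarith
  have hlower : 1 - ξ ω0 * p ω0 ≤ (1 / y) * (1 - p ω0) := by
    have hle : ∑ ω ∈ Finset.univ.erase ω0, ξ ω * p ω ≤
        ∑ ω ∈ Finset.univ.erase ω0, (1 / y) * p ω := by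
      refine Finset.sum_le_sum fun ω _ => ?_
      exact mul_le_mul_of_nonneg_right (hbd ω).2 (hp0 ω)
    rw [herase, ← Finset.mul_sum, heraseP] at hle
    exact hle
  refine ⟨ht0, ht1, ?_, ?_⟩
  · have h2 := mul_le_mul_of_nonneg_left hupper hy0.le
    nlinarith [h2]
  · have h2 := mul_le_mul_of_nonneg_left hlower hy0.le
    have h3 : y * (1 / y * (1 - p ω0)) = 1 - p ω0 := by field_simp
    have h4 : y * (1 - ξ ω0 * p ω0) = y - (y * ξ ω0) * p ω0 := by ring
    linarith

private lemma riskEnv_backward {Ω : Type*} [Fintype Ω] {y : ℝ} (hy0 : 0 < y) {p : Ω → ℝ}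
    (hp0 : ∀ ω, 0 ≤ p ω) (hp1 : ∑ ω, p ω = 1) (ω0 : Ω) {t : ℝ}
    (ht0 : 0 ≤ t) (ht1 : t ≤ 1) (hA : t * p ω0 ≤ y) (hB : y - (1 - p ω0) ≤ t * p ω0) :
    ∃ ξ ∈ riskEnv y p, y * ξ ω0 = t := by
  classical
  set r : ℝ := 1 - p ω0 with hr
  have heraseP : ∑ ω ∈ Finset.univ.erase ω0, p ω = r := by
    have := Finset.sum_erase_add Finset.univ p (Finset.mem_univ ω0)
    rw [hp1] at this; linarith [this]
  have hr0 : 0 ≤ r := by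
    rw [← heraseP]; exact Finset.sum_nonneg fun ω _ => hp0 ω
  set c : ℝ := if r = 0 then 0 else (y - t * p ω0) / (y * r) with hc
  have hyne : y ≠ 0 := ne_of_gt hy0
  refine ⟨fun ω => if ω = ω0 then t / y else c, ⟨fun ω => ?_, ?_⟩, ?_⟩
  · by_cases h : ω = ω0
    · simp only [h, if_true]
      refine ⟨div_nonneg ht0 hy0.le, ?_⟩
      rw [div_le_div_iff₀ hy0 hy0]; nlinarith
    · simp only [if_neg h]
      rcases eq_or_lt_of_le hr0 with h0 | hrpos
      · simp only [hc, if_pos h0.symm]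
        exact ⟨le_refl 0, one_div_nonneg.mpr hy0.le⟩
      · simp only [hc, if_neg (ne_of_gt hrpos)]
        constructor
        · exact div_nonneg (by linarith) (by positivity)
        · rw [div_le_div_iff₀ (by positivity) hy0]
          nlinarith
  · have hsplit := Finset.sum_erase_add Finset.univ
      (fun ω => (if ω = ω0 then t / y else c) * p ω) (Finset.mem_univ ω0)
    have herase : ∑ ω ∈ Finset.univ.erase ω0, (if ω = ω0 then t / y else c) * p ω
        = c * r := by
      rw [Finset.sum_congr rfl (fun ω hω => by
        rw [if_neg (Finset.mem_erase.mp hω).1]), ← Finset.mul_sum, heraseP]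
    rw [← hsplit, herase]
    simp only [if_pos rfl, if_true]
    rcases eq_or_lt_of_le hr0 with h0 | hrpos
    · have hteq : t * p ω0 = y := by linarith
      rw [← h0, mul_zero, zero_add, div_mul_eq_mul_div, hteq, div_self hyne]
    · simp only [hc, if_neg (ne_of_gt hrpos)]
      field_simp
      ring
  · have hv : (fun ω => if ω = ω0 then t / y else c) ω0 = t / y := by simp
    rw [hv]
    field_simp

private lemma envelope_concave {Ω : Type*} [Fintype Ω] (p : Ω → ℝ)
    (hp0 : ∀ ω, 0 ≤ p ω) (hp1 : ∑ ω, p ω = 1) (ω0 : Ω) (f : ℝ → ℝ)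
    (hf : ConcaveOn ℝ (Set.Icc (0:ℝ) 1) fun t => t * f t)
    (B : ℝ) (hB : ∀ t ∈ Set.Icc (0:ℝ) 1, |f t| ≤ B) :
    ConcaveOn ℝ (Set.Ioc (0:ℝ) 1)
      (fun y => y * sSup ((fun ξ : Ω → ℝ => ξ ω0 * f (y * ξ ω0)) '' riskEnv y p)) := by
  have hB0 : 0 ≤ B := le_trans (abs_nonneg _) (hB 0 ⟨le_refl _, zero_le_one⟩)
  set Im : ℝ → Set ℝ := fun y => (fun ξ : Ω → ℝ => ξ ω0 * f (y * ξ ω0)) '' riskEnv y p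
    with hIm
  have hne : ∀ y : ℝ, 0 < y → y ≤ 1 → (Im y).Nonempty := fun y h1 h2 =>
    ⟨_, Set.mem_image_of_mem _ (one_mem_riskEnv h1 h2 hp1)⟩
  have hbdd : ∀ y : ℝ, 0 < y → y ≤ 1 → BddAbove (Im y) := by
    intro y h1 h2
    refine ⟨B / y, ?_⟩
    rintro v ⟨ξ, hξ, rfl⟩
    obtain ⟨hx0, hx1, -, -⟩ := riskEnv_forward h1 hp0 hp1 ω0 hξ
    have hfle : f (y * ξ ω0) ≤ B := le_trans (le_abs_self _) (hB _ ⟨hx0, hx1⟩)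
    have hξ0 : 0 ≤ ξ ω0 := (hξ.1 ω0).1
    have hξ1 : ξ ω0 ≤ 1 / y := (hξ.1 ω0).2
    calc ξ ω0 * f (y * ξ ω0) ≤ ξ ω0 * B := mul_le_mul_of_nonneg_left hfle hξ0
      _ ≤ (1 / y) * B := mul_le_mul_of_nonneg_right hξ1 hB0
      _ = B / y := by ring
  refine ⟨convex_Ioc 0 1, ?_⟩
  intro y1 hy1 y2 hy2 aa bb ha hb hab
  have hyIoc : aa • y1 + bb • y2 ∈ Set.Ioc (0:ℝ) 1 :=
    convex_Ioc 0 1 hy1 hy2 ha hb hab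
  simp only [smul_eq_mul] at hyIoc ⊢
  set y : ℝ := aa * y1 + bb * y2 with hy
  have e1 : ∀ v : ℝ, aa * (y1 * v) = (aa * y1) * v := fun v => by ring
  have e2 : ∀ v : ℝ, bb * (y2 * v) = (bb * y2) * v := fun v => by ring
  rw [e1, e2]
  refine combine_csSup_le (mul_nonneg ha hy1.1.le) (mul_nonneg hb hy2.1.le)
    (hne y1 hy1.1 hy1.2) (hne y2 hy2.1 hy2.2) ?_
  rintro v1 ⟨ξ1, hξ1, rfl⟩ v2 ⟨ξ2, hξ2, rfl⟩
  obtain ⟨h10, h11, h1A, h1B⟩ := riskEnv_forward hy1.1 hp0 hp1 ω0 hξ1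
  obtain ⟨h20, h21, h2A, h2B⟩ := riskEnv_forward hy2.1 hp0 hp1 ω0 hξ2
  set t1 : ℝ := y1 * ξ1 ω0 with hdt1
  set t2 : ℝ := y2 * ξ2 ω0 with hdt2
  set t : ℝ := aa * t1 + bb * t2 with hdt
  have ht0 : 0 ≤ t := add_nonneg (mul_nonneg ha h10) (mul_nonneg hb h20)
  have ht1 : t ≤ 1 := by
    have i1 := mul_le_mul_of_nonneg_left h11 ha
    have i2 := mul_le_mul_of_nonneg_left h21 hb
    rw [hdt]; rw [mul_one] at i1 i2; linarith
  have htA : t * p ω0 ≤ y := by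
    have i1 := mul_le_mul_of_nonneg_left h1A ha
    have i2 := mul_le_mul_of_nonneg_left h2A hb
    have hid : t * p ω0 = aa * (t1 * p ω0) + bb * (t2 * p ω0) := by ring
    linarith
  have htB : y - (1 - p ω0) ≤ t * p ω0 := by
    have i1 := mul_le_mul_of_nonneg_left h1B ha
    have i2 := mul_le_mul_of_nonneg_left h2B hb
    have hid : t * p ω0 = aa * (t1 * p ω0) + bb * (t2 * p ω0) := by ring
    have hid2 : y - (1 - p ω0) = aa * (y1 - (1 - p ω0)) + bb * (y2 - (1 - p ω0)) := by
      rw [hy]; linear_combination (1 - p ω0) * hab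
    linarith
  obtain ⟨ξ, hξ, hξt⟩ := riskEnv_backward hyIoc.1 hp0 hp1 ω0 ht0 ht1 htA htB
  have hmem : ξ ω0 * f (y * ξ ω0) ∈ Im y := ⟨ξ, hξ, rfl⟩
  have hle := le_csSup (hbdd y hyIoc.1 hyIoc.2) hmem
  have hle2 : y * (ξ ω0 * f (y * ξ ω0)) ≤ y * sSup (Im y) :=
    mul_le_mul_of_nonneg_left hle hyIoc.1.le
  have key := hf.2 (x := t1) (y := t2) ⟨h10, h11⟩ ⟨h20, h21⟩ ha hb hab
  simp only [smul_eq_mul] at key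
  have heq : y * (ξ ω0 * f (y * ξ ω0)) = t * f t := by rw [← hξt]; ring
  have eL1 : (aa * y1) * (ξ1 ω0 * f (y1 * ξ1 ω0)) = aa * (t1 * f t1) := by
    rw [hdt1]; ring
  have eL2 : (bb * y2) * (ξ2 ω0 * f (y2 * ξ2 ω0)) = bb * (t2 * f t2) := by
    rw [hdt2]; ring
  rw [eL1, eL2]
  calc aa * (t1 * f t1) + bb * (t2 * f t2)
      ≤ (aa * t1 + bb * t2) * f (aa * t1 + bb * t2) := key
    _ = t * f t := by rw [hdt]
    _ = y * (ξ ω0 * f (y * ξ ω0)) := heq.symm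
    _ ≤ y * sSup (Im y) := hle2

private lemma concaveOn_congr' {s : Set ℝ} {f g : ℝ → ℝ} (h : ConcaveOn ℝ s f)
    (he : ∀ x ∈ s, f x = g x) : ConcaveOn ℝ s g :=
  ⟨h.1, fun x hx y hy a b ha hb hab => by
    rw [← he _ hx, ← he _ hy, ← he _ (h.1 hx hy ha hb hab)]
    exact h.2 hx hy ha hb hab⟩

private lemma concaveOn_finset_inf' {ι : Type*} {t : Finset ι} (ht : t.Nonempty)
    {s : Set ℝ} (hs : Convex ℝ s) {F : ι → ℝ → ℝ} (hF : ∀ i ∈ t, ConcaveOn ℝ s (F i)) :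
    ConcaveOn ℝ s (fun y => t.inf' ht fun i => F i y) := by
  refine ⟨hs, fun x hx y hy a b ha hb hab => ?_⟩
  rw [Finset.le_inf'_iff]
  intro i hi
  have h1 : t.inf' ht (fun j => F j x) ≤ F i x := Finset.inf'_le _ hi
  have h2 : t.inf' ht (fun j => F j y) ≤ F i y := Finset.inf'_le _ hi
  have h3 := (hF i hi).2 hx hy ha hb hab
  simp only [smul_eq_mul] at h3 ⊢
  have i1 := mul_le_mul_of_nonneg_left h1 ha
  have i2 := mul_le_mul_of_nonneg_left h2 hb
  linarith

private lemma concaveOn_finset_sum {ι : Type*} {t : Finset ι} {s : Set ℝ}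
    (hs : Convex ℝ s) {F : ι → ℝ → ℝ} :
    (∀ i ∈ t, ConcaveOn ℝ s (F i)) → ConcaveOn ℝ s (fun y => ∑ i ∈ t, F i y) := by
  classical
  induction t using Finset.induction_on with
  | empty => intro _; simpa using concaveOn_const (0:ℝ) hs
  | insert _ _ hi ih =>
    intro hF
    simp only [Finset.sum_insert hi]
    exact (hF _ (Finset.mem_insert_self _ _)).add
      (ih fun i h => hF i (Finset.mem_insert_of_mem h))

private lemma concaveOn_cmul {s : Set ℝ} {c : ℝ} (hc : 0 ≤ c) {f : ℝ → ℝ}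
    (h : ConcaveOn ℝ s f) : ConcaveOn ℝ s (fun y => c * f y) := by
  refine ⟨h.1, fun x hx y hy a b ha hb hab => ?_⟩
  have h3 := h.2 hx hy ha hb hab
  simp only [smul_eq_mul] at h3 ⊢
  have := mul_le_mul_of_nonneg_left h3 hc
  nlinarith [this]

private lemma concaveOn_linear {s : Set ℝ} (hs : Convex ℝ s) (k : ℝ) :
    ConcaveOn ℝ s (fun y => k * y) :=
  ⟨hs, fun x hx y hy a b ha hb hab => le_of_eq (by simp only [smul_eq_mul]; ring)⟩

private lemma inf'_mul_left {ι : Type*} {t : Finset ι} (ht : t.Nonempty) {y : ℝ}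
    (hy : 0 ≤ y) (F : ι → ℝ) :
    t.inf' ht (fun i => y * F i) = y * t.inf' ht F := by
  have := map_finset_inf'
    (⟨fun v => y * v, fun a b => mul_min_of_nonneg a b hy⟩ : InfHom ℝ ℝ) ht F
  exact this.symm

/-- Concavity preservation of the CVaR QD-learning update (Theorem 3). -/
theorem cvar_qd_update_concave {S A : Type*} [Fintype S] [Fintype A] [Nonempty S] [Nonempty A]
    (P : S → A → S → ℝ)
    (hP : ∀ s a, (∀ s', 0 ≤ P s a s') ∧ ∑ s', P s a s' = 1)
    {γ : ℝ} (hγ0 : 0 ≤ γ) (hγ1 : γ < 1)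
    (N : ℕ) (Nbr : Fin N → Finset (Fin N))
    (s : S) (a : A) (s' : S)
    (α β : ℝ) (hα : 0 ≤ α) (hβ : 0 ≤ β)
    (hαβ : ∀ n : Fin N, 0 ≤ 1 - α - (Nbr n).card * β)
    (cost : Fin N → ℝ)
    (Q : Fin N → S → A → ℝ → ℝ)
    (hb : ∃ B : ℝ, ∀ n σ a', ∀ y ∈ Set.Icc (0:ℝ) 1, |Q n σ a' y| ≤ B)
    (hconc : ∀ n σ a', ConcaveOn ℝ (Set.Icc (0:ℝ) 1) (fun y => y * Q n σ a' y))
    (Q' : Fin N → ℝ → ℝ)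
    (hQ' : ∀ n : Fin N, ∀ y ∈ Set.Ioc (0:ℝ) 1,
      Q' n y = (1 - α - (Nbr n).card * β) * Q n s a y
        + β * ∑ l ∈ Nbr n, Q l s a y
        + α * (cost n + γ * Finset.univ.inf' Finset.univ_nonempty (fun a' : A =>
            sSup ((fun ξ : S → ℝ => ξ s' * Q n s' a' (y * ξ s')) ''
              riskEnv y (P s a))))) :
    ∀ n : Fin N, ConcaveOn ℝ (Set.Ioc (0:ℝ) 1) (fun y => y * Q' n y) := by
  intro n
  obtain ⟨B, hB⟩ := hb
  have hp0 := (hP s a).1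
  have hp1 := (hP s a).2
  have hIoc : Convex ℝ (Set.Ioc (0:ℝ) 1) := convex_Ioc 0 1
  have hgc : ∀ a' : A, ConcaveOn ℝ (Set.Ioc (0:ℝ) 1)
      (fun y => y * sSup ((fun ξ : S → ℝ => ξ s' * Q n s' a' (y * ξ s')) ''
        riskEnv y (P s a))) := fun a' =>
    envelope_concave (P s a) hp0 hp1 s' (Q n s' a') (hconc n s' a') B
      (fun tt htt => hB n s' a' tt htt)
  have hc0 : 0 ≤ 1 - α - (Nbr n).card * β := hαβ n
  refine concaveOn_congr' (f := fun y =>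
      (1 - α - (Nbr n).card * β) * (y * Q n s a y)
      + β * (∑ l ∈ Nbr n, y * Q l s a y)
      + (α * cost n) * y
      + (α * γ) * (Finset.univ.inf' Finset.univ_nonempty (fun a' : A =>
          y * sSup ((fun ξ : S → ℝ => ξ s' * Q n s' a' (y * ξ s')) ''
            riskEnv y (P s a))))) ?_ ?_
  · have h1 := concaveOn_cmul hc0 ((hconc n s a).subset Set.Ioc_subset_Icc_self hIoc)
    have h2 := concaveOn_cmul hβ (concaveOn_finset_sum (t := Nbr n) hIoc
      (F := fun l y => y * Q l s a y)
      (fun l _ => (hconc l s a).subset Set.Ioc_subset_Icc_self hIoc))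
    have h3 := concaveOn_linear hIoc (α * cost n)
    have h4 := concaveOn_cmul (mul_nonneg hα hγ0)
      (concaveOn_finset_inf' Finset.univ_nonempty hIoc (fun a' _ => hgc a'))
    exact ((h1.add h2).add h3).add h4
  · intro y hy
    rw [hQ' n y hy]
    rw [inf'_mul_left Finset.univ_nonempty hy.1.le]
    rw [← Finset.mul_sum]
    ring
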